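/- Let f : ℍ → ℂ be a conformal (univalent analytic) map of the upper half plane, let z₀ = x₀ + i y₀ ∈ ℍ, let E ⊂ (x₀ − y₀/2, x₀ + y₀/2) be a nonempty compact set, and suppose there is a constant K ≥ 1 such that (1/K) |f'(z₀)| ≤ |f'(w)| ≤ K |f'(z₀)| for every w in the sawtooth region S(E) := { x + iy : x ∈ (x₀ − y₀/2, x₀ + y₀/2), dist(x, E) ≤ y < y₀ }. Then f(S(E)) is a John domain whose John constant depends only on K. -/

import Mathlib

open Set Metric MeasureTheory Filter Topology
open scoped ENNReal NNReal

noncomputable section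

/-- The open upper half plane in `ℂ`. -/
def UHP : Set ℂ := {z : ℂ | 0 < z.im}

/-- The `α`-dimensional Hausdorff content of a set. -/
def hContent {X : Type*} [PseudoEMetricSpace X] (α : ℝ) (A : Set X) : ℝ≥0∞ :=
  ⨅ (E : ℕ → Set X) (_ : A ⊆ ⋃ n, E n), ∑' n, EMetric.diam (E n) ^ α

/-- `Ω` is a `C`-John domain with center `z₀`: every point of `Ω` can be joined to `z₀`
by a rectifiable curve in `Ω` along which the distance to the boundary dominates
(up to the factor `C`) the length of the subcurve already traversed. -/
def IsJohnDomain (C : ℝ) (Ω : Set ℂ) (z₀ : ℂ) : Prop :=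
  z₀ ∈ Ω ∧ ∀ z ∈ Ω, ∃ γ : ℝ → ℂ,
    ContinuousOn γ (Set.Icc 0 1) ∧ γ 0 = z ∧ γ 1 = z₀ ∧
    (∀ t ∈ Set.Icc (0:ℝ) 1, γ t ∈ Ω) ∧
    eVariationOn γ (Set.Icc 0 1) ≠ ⊤ ∧
    ∀ t ∈ Set.Icc (0:ℝ) 1,
      (eVariationOn γ (Set.Icc 0 t)).toReal ≤ C * infDist (γ t) (frontier Ω)

/-- `u` is harmonic on the upper half plane: it is `C²` there and satisfies
`u_xx + u_yy = 0`. -/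
def HarmonicOnH (u : ℂ → ℝ) : Prop :=
  ContDiffOn ℝ 2 u UHP ∧ ∀ z ∈ UHP,
    fderiv ℝ (fun w => fderiv ℝ u w 1) z 1 +
      fderiv ℝ (fun w => fderiv ℝ u w Complex.I) z Complex.I = 0

/-- For an interval `I = [c, d]`, the point `z_I = x_I + i |I|` where `x_I` is the center. -/
def zI (c d : ℝ) : ℂ := ((c + d) / 2 : ℝ) + (d - c) * Complex.I

/-- The square `Q(I) = {x + iy : x ∈ I, 0 < y < |I|}` over the interval `I = [c, d]`. -/
def Qsq (c d : ℝ) : Set ℂ := {z : ℂ | z.re ∈ Set.Icc c d ∧ z.im ∈ Set.Ioo 0 (d - c)}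

/-- `[c, d]` is a dyadic subinterval of `[a, b]`, i.e. obtained by repeated bisection. -/
def IsDyadicSub (a b c d : ℝ) : Prop :=
  ∃ n k : ℕ, k < 2 ^ n ∧ c = a + k * (b - a) / 2 ^ n ∧ d = a + (k + 1) * (b - a) / 2 ^ n

/-- The family `F(I)` of maximal dyadic subintervals `J` of `I = [a, b]` with
`|u(z_J) - u(z_I)| ≥ M`, encoded as pairs of endpoints. -/
def MaxF (u : ℂ → ℝ) (a b M : ℝ) : Set (ℝ × ℝ) :=
  {p : ℝ × ℝ | IsDyadicSub a b p.1 p.2 ∧ M ≤ |u (zI p.1 p.2) - u (zI a b)| ∧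
    ∀ c d : ℝ, IsDyadicSub a b c d → M ≤ |u (zI c d) - u (zI a b)| →
      Set.Icc p.1 p.2 ⊆ Set.Icc c d → c = p.1 ∧ d = p.2}

/-- The set `G(I)` of points `x` of `I = [a, b]` over whose whole vertical segment in `Q(I)`
the oscillation `|u - u(z_I)|` is at most `M + A√2`. -/
def GSet (u : ℂ → ℝ) (a b M A : ℝ) : Set ℝ :=
  {x ∈ Set.Icc a b | ∀ y : ℝ, 0 < y → y < b - a →
    |u ((x : ℂ) + y * Complex.I) - u (zI a b)| ≤ M + A * Real.sqrt 2}

/-- The sawtooth region `S(E)` over `E ⊆ (x₀ - y₀/2, x₀ + y₀/2)`. -/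
def Sawtooth (E : Set ℝ) (x₀ y₀ : ℝ) : Set ℂ :=
  {z : ℂ | z.re ∈ Set.Ioo (x₀ - y₀ / 2) (x₀ + y₀ / 2) ∧ 0 < z.im ∧
    infDist z.re E ≤ z.im ∧ z.im < y₀}

set_option maxHeartbeats 1000000

lemma isOpen_UHP : IsOpen UHP := isOpen_Ioi.preimage Complex.continuous_im

lemma mem_sawtooth_iff {E : Set ℝ} {x₀ y₀ : ℝ} {z : ℂ} :
    z ∈ Sawtooth E x₀ y₀ ↔ (x₀ - y₀/2 < z.re ∧ z.re < x₀ + y₀/2) ∧ 0 < z.im ∧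
      infDist z.re E ≤ z.im ∧ z.im < y₀ := Iff.rfl

lemma le_infDist' {s : Set ℂ} {x : ℂ} {b : ℝ} (hs : s.Nonempty)
    (h : ∀ y ∈ s, b ≤ dist x y) : b ≤ infDist x s := by
  rw [Metric.infDist_eq_iInf]
  haveI : Nonempty s := hs.to_subtype
  exact le_ciInf fun y => h y y.2

lemma eVariationOn_le_of_lip {C : ℝ≥0} {g : ℝ → ℂ} {A B : ℝ}
    (hg : LipschitzOnWith C g (Set.Icc A B)) :
    eVariationOn g (Set.Icc A B) ≤ (C : ℝ≥0∞) * ENNReal.ofReal (B - A) := by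
  refine iSup_le ?_
  rintro ⟨n, u, hu, us⟩
  have hsum : ∀ i : ℕ, edist (u (i+1)) (u i) = ENNReal.ofReal (u (i+1) - u i) := by
    intro i
    rw [edist_dist, Real.dist_eq, abs_of_nonneg (sub_nonneg.2 (hu (Nat.le_succ i)))]
  calc ∑ i ∈ Finset.range n, edist (g (u (i+1))) (g (u i))
      ≤ ∑ i ∈ Finset.range n, (C : ℝ≥0∞) * edist (u (i+1)) (u i) :=
        Finset.sum_le_sum fun i _ => hg (us _) (us _)
    _ = (C : ℝ≥0∞) * ∑ i ∈ Finset.range n, edist (u (i+1)) (u i) := by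
        rw [← Finset.mul_sum]
    _ ≤ (C : ℝ≥0∞) * ENNReal.ofReal (B - A) := by
        refine mul_le_mul_right ?_ _
        calc ∑ i ∈ Finset.range n, edist (u (i+1)) (u i)
            = ENNReal.ofReal (∑ i ∈ Finset.range n, (u (i+1) - u i)) := by
              rw [ENNReal.ofReal_sum_of_nonneg fun i _ => sub_nonneg.2 (hu (Nat.le_succ i))]
              exact Finset.sum_congr rfl fun i _ => hsum i
          _ = ENNReal.ofReal (u n - u 0) := by rw [Finset.sum_range_sub]
          _ ≤ _ := ENNReal.ofReal_le_ofReal (by linarith [(us n).2, (us 0).1])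

lemma norm_sub_le_of_segment {f : ℂ → ℂ} (hf : DifferentiableOn ℂ f UHP) {Λ : ℝ}
    {T : Set ℂ} (hT : T ⊆ UHP) (hder : ∀ w ∈ T, ‖deriv f w‖ ≤ Λ) {u v : ℂ}
    (hseg : ∀ s ∈ Set.Icc (0:ℝ) 1, u + s • (v - u) ∈ T) :
    ‖f v - f u‖ ≤ Λ * ‖v - u‖ := by
  have key : ∀ s ∈ Set.Icc (0:ℝ) 1,
      HasDerivAt (fun t : ℝ => f (u + t • (v - u)))
        ((v - u) • deriv f (u + s • (v - u))) s := by
    intro s hs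
    have hφ : HasDerivAt (fun t : ℝ => u + t • (v - u)) (v - u) s := by
      simpa using ((hasDerivAt_id s).smul_const (v - u)).const_add u
    have hfd : HasDerivAt f (deriv f (u + s • (v - u))) (u + s • (v - u)) :=
      (hf.differentiableAt (isOpen_UHP.mem_nhds (hT (hseg s hs)))).hasDerivAt
    exact hfd.scomp s hφ
  have h2 := norm_image_sub_le_of_norm_deriv_le_segment'
    (f := fun t : ℝ => f (u + t • (v - u)))
    (f' := fun s => (v - u) • deriv f (u + s • (v - u))) (C := Λ * ‖v - u‖)
    (fun x hx => (key x hx).hasDerivWithinAt)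
    (fun x hx => by
      rw [norm_smul, mul_comm]
      exact mul_le_mul_of_nonneg_right (hder _ (hseg x (Ico_subset_Icc_self hx)))
        (norm_nonneg _)) 1 (right_mem_Icc.2 zero_le_one)
  simpa using h2

lemma closedBall_subset_image {f : ℂ → ℂ} {z : ℂ} {d μ Λ : ℝ}
    (hd : 0 < d) (hμ : 0 < μ)
    (hf : DifferentiableOn ℂ f (Metric.ball z d))
    (hlow : ∀ w ∈ Metric.ball z d, μ ≤ ‖deriv f w‖)
    (hup : ∀ w ∈ Metric.ball z d, ‖deriv f w‖ ≤ Λ) :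
    Metric.closedBall (f z) (μ^2 * d / (16 * Λ)) ⊆ f '' Metric.ball z d := by
  have hzb : z ∈ Metric.ball z d := Metric.mem_ball_self hd
  have hμΛ : μ ≤ Λ := (hlow z hzb).trans (hup z hzb)
  have hΛ : 0 < Λ := hμ.trans_le hμΛ
  set g := deriv f with hgdef
  have hg : DifferentiableOn ℂ g (Metric.ball z d) :=
    ((hf.analyticOnNhd Metric.isOpen_ball).deriv).differentiableOn
  have hmaps : MapsTo g (Metric.ball z d) (Metric.ball (g z) (3 * Λ)) := by
    intro w hw
    have h1 : ‖g w‖ ≤ Λ := hup w hw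
    have h2 : ‖g z‖ ≤ Λ := hup z hzb
    have : dist (g w) (g z) ≤ 2 * Λ := by
      calc dist (g w) (g z) ≤ ‖g w‖ + ‖g z‖ := dist_le_norm_add_norm _ _
        _ ≤ 2 * Λ := by linarith
    exact Metric.mem_ball.2 (lt_of_le_of_lt this (by linarith))
  have hgLip : ∀ w ∈ Metric.ball z d, ‖g w - g z‖ ≤ 3 * Λ / d * ‖w - z‖ := by
    intro w hw
    have := Complex.dist_le_div_mul_dist_of_mapsTo_ball hg (hmaps.mono_right Metric.ball_subset_closedBall) hw
    rwa [dist_eq_norm, dist_eq_norm] at this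
  set ρ := μ * d / (12 * Λ) with hρdef
  have hρpos : 0 < ρ := by positivity
  have hρd : ρ < d := by
    rw [hρdef, div_lt_iff₀ (by positivity)]
    nlinarith
  have hsub : Metric.closedBall z ρ ⊆ Metric.ball z d := by
    intro w hw
    exact lt_of_le_of_lt (Metric.mem_closedBall.1 hw) hρd
  set A := g z with hAdef
  have hAnorm : μ ≤ ‖A‖ := hlow z hzb
  have hA0 : A ≠ 0 := by
    intro h0
    rw [h0, norm_zero] at hAnorm; linarith
  set e : ℂ ≃L[ℂ] ℂ := ContinuousLinearEquiv.unitsEquivAut ℂ (Units.mk0 A hA0) with hedef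
  have happrox : ApproximatesLinearOn f (e : ℂ →L[ℂ] ℂ) (Metric.closedBall z ρ)
      (Real.toNNReal (μ/4)) := by
    intro x hx y hy
    have hFd : ∀ w ∈ Metric.closedBall z ρ,
        HasFDerivWithinAt (fun w => f w - w * A)
          (ContinuousLinearMap.smulRight (1 : ℂ →L[ℂ] ℂ) (g w - A))
          (Metric.closedBall z ρ) w := by
      intro w hw
      have h1 : HasDerivAt f (g w) w :=
        (hf.differentiableAt (Metric.isOpen_ball.mem_nhds (hsub hw))).hasDerivAt
      have h2 : HasDerivAt (fun w : ℂ => f w - w * A) (g w - A) w := by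
        have h3 := h1.sub ((hasDerivAt_id' w).mul_const A)
        rw [one_mul] at h3
        exact h3
      exact (hasDerivAt_iff_hasFDerivAt.1 h2).hasFDerivWithinAt
    have hbound : ∀ w ∈ Metric.closedBall z ρ,
        ‖ContinuousLinearMap.smulRight (1 : ℂ →L[ℂ] ℂ) (g w - A)‖ ≤ μ / 4 := by
      intro w hw
      rw [ContinuousLinearMap.norm_smulRight_apply, ContinuousLinearMap.one_def,
        ContinuousLinearMap.norm_id, one_mul]
      have := hgLip w (hsub hw)
      have hwz : ‖w - z‖ ≤ ρ := by
        rw [← dist_eq_norm]; exact Metric.mem_closedBall.1 hw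
      calc ‖g w - A‖ ≤ 3 * Λ / d * ‖w - z‖ := this
        _ ≤ 3 * Λ / d * ρ := by
            exact mul_le_mul_of_nonneg_left hwz (by positivity)
        _ = μ / 4 := by rw [hρdef]; field_simp; norm_num
    have hmv := Convex.norm_image_sub_le_of_norm_hasFDerivWithin_le hFd hbound
      (convex_closedBall z ρ) hy hx
    have hcoe : ((Real.toNNReal (μ/4) : ℝ≥0) : ℝ) = μ / 4 :=
      Real.coe_toNNReal _ (by positivity)
    rw [hcoe]
    calc ‖f x - f y - (e : ℂ →L[ℂ] ℂ) (x - y)‖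
        = ‖(f x - x * A) - (f y - y * A)‖ := by
          congr 1
          have : (e : ℂ →L[ℂ] ℂ) (x - y) = (x - y) * A := by
            simp [hedef]
          rw [this]; ring
      _ ≤ μ / 4 * ‖x - y‖ := hmv
  set f'symm := e.toNonlinearRightInverse with hfsdef
  have hnn : (f'symm.nnnorm : ℝ) = ‖A‖⁻¹ := by
    have hsymmapp : ∀ x : ℂ, e.symm x = x * A⁻¹ := by
      intro x
      simp [hedef]
    have h0 : (f'symm.nnnorm : ℝ) = ‖(e.symm : ℂ →L[ℂ] ℂ)‖ := rfl
    rw [h0]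
    refine le_antisymm (ContinuousLinearMap.opNorm_le_bound _ (by positivity) fun x => by
      rw [ContinuousLinearEquiv.coe_coe, hsymmapp, norm_mul, norm_inv, mul_comm]) ?_
    have h1 : ‖(e.symm : ℂ →L[ℂ] ℂ) 1‖ ≤ ‖(e.symm : ℂ →L[ℂ] ℂ)‖ * ‖(1:ℂ)‖ :=
      ContinuousLinearMap.le_opNorm _ _
    rw [ContinuousLinearEquiv.coe_coe, hsymmapp, one_mul, norm_one, mul_one, norm_inv] at h1
    exact h1
  have hsurj := happrox.surjOn_closedBall_of_nonlinearRightInverse f'symm hρpos.le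
    (subset_refl _)
  have hrad : μ^2 * d / (16 * Λ) ≤ ((f'symm.nnnorm : ℝ)⁻¹ - (Real.toNNReal (μ/4) : ℝ≥0)) * ρ := by
    rw [hnn, inv_inv]
    have hcoe : ((Real.toNNReal (μ/4) : ℝ≥0) : ℝ) = μ / 4 :=
      Real.coe_toNNReal _ (by positivity)
    rw [hcoe]
    have h1 : (3 * μ / 4) * ρ = μ^2 * d / (16 * Λ) := by
      rw [hρdef]; field_simp; ring
    calc μ^2 * d / (16 * Λ) = (3 * μ / 4) * ρ := h1.symm
      _ ≤ (‖A‖ - μ/4) * ρ := by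
          refine mul_le_mul_of_nonneg_right (by linarith) hρpos.le
  intro y hy
  have hy' : y ∈ Metric.closedBall (f z)
      (((f'symm.nnnorm : ℝ)⁻¹ - (Real.toNNReal (μ/4) : ℝ≥0)) * ρ) :=
    Metric.mem_closedBall.2 ((Metric.mem_closedBall.1 hy).trans hrad)
  obtain ⟨x, hx, hfx⟩ := hsurj hy'
  exact ⟨x, hsub hx, hfx⟩

/-- if the derivative of a conformal map `f` of `ℍ` is comparable to
`f'(z₀)` (within a factor `K`) on the sawtooth region `S(E)` over a nonempty compact set
`E ⊆ (x₀ - y₀/2, x₀ + y₀/2)`, then `f(S(E))` is a John domain with constant depending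
only on `K`. -/
theorem image_sawtooth_is_john (K : ℝ) (hK : 1 ≤ K) :
    ∃ C : ℝ, 0 < C ∧
      ∀ f : ℂ → ℂ, DifferentiableOn ℂ f UHP → Set.InjOn f UHP →
        ∀ z₀ ∈ UHP, ∀ E : Set ℝ, E.Nonempty → IsCompact E →
          E ⊆ Set.Ioo (z₀.re - z₀.im / 2) (z₀.re + z₀.im / 2) →
          (∀ w ∈ Sawtooth E z₀.re z₀.im,
            ‖deriv f z₀‖ / K ≤ ‖deriv f w‖ ∧ ‖deriv f w‖ ≤ K * ‖deriv f z₀‖) →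
          ∃ w₀ ∈ f '' Sawtooth E z₀.re z₀.im,
            IsJohnDomain C (f '' Sawtooth E z₀.re z₀.im) w₀ := by
  have hK0 : 0 < K := lt_of_lt_of_le one_pos hK
  refine ⟨1024 * K ^ 4, by positivity, ?_⟩
  intro f hf _hinj z₀ hz₀ E hEne hEcomp hEsub hcomp
  set m := ‖deriv f z₀‖ with hmdef
  have hm0 : 0 ≤ m := norm_nonneg _
  obtain ⟨e₀, he₀⟩ := hEne
  set S := Sawtooth E z₀.re z₀.im with hSdef
  set h := z₀.im with hhdef
  have hh : 0 < h := hz₀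
  set a := z₀.re - h/2 with hadef
  set b := z₀.re + h/2 with hbdef
  have hba : b - a = h := by rw [hadef, hbdef]; ring
  have memS : ∀ w : ℂ, a < w.re → w.re < b → 0 < w.im →
      infDist w.re E ≤ w.im → w.im < h → w ∈ S := by
    intro w h1 h2 h3 h4 h5
    exact mem_sawtooth_iff.2 ⟨⟨h1, h2⟩, h3, h4, h5⟩
  have hSU : S ⊆ UHP := fun w hw => (mem_sawtooth_iff.1 hw).2.1
  have hup : ∀ w ∈ S, ‖deriv f w‖ ≤ K * m := fun w hw => (hcomp w hw).2
  have hlow : ∀ w ∈ S, m / K ≤ ‖deriv f w‖ := fun w hw => (hcomp w hw).1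
  have hKm0 : 0 ≤ K * m := mul_nonneg hK0.le hm0
  clear_value m S h a b
  -- the clamping map
  set cl : ℝ → ℝ := fun u => max (a + h/8) (min (b - h/8) u) with hcldef
  have hclab : a + h/8 ≤ b - h/8 := by linarith
  have hcl1 : ∀ u, a + h/8 ≤ cl u := fun u => le_max_left _ _
  have hcl2 : ∀ u, cl u ≤ b - h/8 := fun u => max_le hclab (min_le_left _ _)
  have hcl3 : ∀ u, a < u → u < b → |cl u - u| ≤ h/8 := by
    intro u h1 h2
    rw [abs_le]
    constructor
    · have hmin : u - h/8 ≤ min (b - h/8) u := le_min (by linarith) (by linarith)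
      have := le_max_right (a + h/8) (min (b - h/8) u)
      have : u - h/8 ≤ cl u := hmin.trans this
      linarith
    · have hmax : cl u ≤ max (a + h/8) u :=
        max_le_max le_rfl (min_le_right _ _)
      have : max (a + h/8) u ≤ u + h/8 := max_le (by linarith) (by linarith)
      have := hmax.trans this
      linarith
  -- the John center
  set q : ℂ := ⟨cl e₀, 3*h/4⟩ with hqdef
  have hqre : q.re = cl e₀ := rfl
  have hqim : q.im = 3*h/4 := rfl
  have he₀ab : a < e₀ ∧ e₀ < b := ⟨(hEsub he₀).1, (hEsub he₀).2⟩
  have hqS : q ∈ S := by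
    refine memS q (by rw [hqre]; linarith [hcl1 e₀]) (by rw [hqre]; linarith [hcl2 e₀])
      (by rw [hqim]; linarith) ?_ (by rw [hqim]; linarith)
    rw [hqre, hqim]
    have h1 : infDist (cl e₀) E ≤ |cl e₀ - e₀| := by
      rw [← Real.dist_eq]; exact infDist_le_dist_of_mem he₀
    have h2 := hcl3 e₀ he₀ab.1 he₀ab.2
    linarith
  clear_value q cl
  -- real/imaginary parts of affine paths
  have hre : ∀ (c : ℝ) (u v : ℂ), (u + c • (v - u)).re = u.re + c * (v.re - u.re) := by
    intro c u v
    simp [Complex.add_re, Complex.smul_re, Complex.sub_re]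
  have him : ∀ (c : ℝ) (u v : ℂ), (u + c • (v - u)).im = u.im + c * (v.im - u.im) := by
    intro c u v
    simp [Complex.add_im, Complex.smul_im, Complex.sub_im]
  -- the key construction of John curves
  have key : ∀ p ∈ S, ∃ σ : ℝ → ℂ, σ 0 = p ∧ σ 1 = q ∧
      (∀ t ∈ Icc (0:ℝ) 1, σ t ∈ S) ∧
      (∀ t ∈ Icc (0:ℝ) 1, Metric.ball (σ t) (t * h / 16) ⊆ S) ∧
      LipschitzOnWith (Real.toNNReal (4*(K*m)*h)) (f ∘ σ) (Icc 0 1) := by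
    intro p hp
    rw [hSdef] at hp
    obtain ⟨⟨hpa, hpb⟩, hpim, hpE, hpimh⟩ := mem_sawtooth_iff.1 hp
    rw [← hadef] at hpa
    rw [← hbdef] at hpb
    obtain ⟨e, heE, hpe⟩ := hEcomp.exists_infDist_eq_dist ⟨e₀, he₀⟩ p.re
    have heab : a < e ∧ e < b := ⟨(hEsub heE).1, (hEsub heE).2⟩
    have hpe' : |p.re - e| ≤ p.im := by
      rw [← Real.dist_eq, ← hpe]; exact hpE
    set x' := cl e with hx'def
    set r : ℂ := ⟨x', 3*h/4⟩ with hrdef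
    have hrre : r.re = x' := rfl
    have hrim : r.im = 3*h/4 := rfl
    clear_value r x'
    have hxe : |x' - e| ≤ h/8 := by rw [hx'def]; exact hcl3 e heab.1 heab.2
    -- margins along the first segment
    have M1 : ∀ s ∈ Icc (0:ℝ) 1,
        a + s*(h/8) ≤ (p + s • (r - p)).re ∧ (p + s • (r - p)).re ≤ b - s*(h/8) ∧
        (p + s • (r - p)).im ≤ h - s*(h/4) ∧
        infDist ((p + s • (r - p)).re) E + s*(5*h/8) ≤ (p + s • (r - p)).im ∧
        (p + s • (r - p)) ∈ S := by
      intro s hs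
      obtain ⟨hs0, hs1⟩ := hs
      have hre1 : (p + s • (r - p)).re = (1-s)*p.re + s*x' := by
        rw [hre]; rw [hrre]; ring
      have him1 : (p + s • (r - p)).im = (1-s)*p.im + s*(3*h/4) := by
        rw [him]; rw [hrim]; ring
      have g1 : a + s*(h/8) ≤ (p + s • (r - p)).re := by
        rw [hre1]
        linarith [mul_nonneg (by linarith : (0:ℝ) ≤ 1 - s) (by linarith : (0:ℝ) ≤ p.re - a),
          mul_nonneg hs0 (by linarith [hcl1 e] : (0:ℝ) ≤ x' - (a + h/8))]
      have g2 : (p + s • (r - p)).re ≤ b - s*(h/8) := by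
        rw [hre1]
        linarith [mul_nonneg (by linarith : (0:ℝ) ≤ 1 - s) (by linarith : (0:ℝ) ≤ b - p.re),
          mul_nonneg hs0 (by linarith [hcl2 e] : (0:ℝ) ≤ (b - h/8) - x')]
      have g3 : (p + s • (r - p)).im ≤ h - s*(h/4) := by
        rw [him1]
        linarith [mul_nonneg (by linarith : (0:ℝ) ≤ 1 - s) (by linarith : (0:ℝ) ≤ h - p.im)]
      have g4 : infDist ((p + s • (r - p)).re) E + s*(5*h/8) ≤ (p + s • (r - p)).im := by
        have habs : |(p + s • (r - p)).re - e| ≤ (1-s)*|p.re - e| + s*|x' - e| := by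
          rw [hre1]
          have heq : (1-s)*p.re + s*x' - e = (1-s)*(p.re - e) + s*(x' - e) := by ring
          rw [heq]
          calc |(1-s)*(p.re - e) + s*(x' - e)| ≤ |(1-s)*(p.re - e)| + |s*(x' - e)| :=
                abs_add_le _ _
            _ = (1-s)*|p.re - e| + s*|x' - e| := by
                rw [abs_mul, abs_mul, abs_of_nonneg (by linarith : (0:ℝ) ≤ 1-s),
                  abs_of_nonneg hs0]
        have hid : infDist ((p + s • (r - p)).re) E ≤ |(p + s • (r - p)).re - e| := by
          rw [← Real.dist_eq]; exact infDist_le_dist_of_mem heE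
        rw [him1]
        have hkey : (1-s)*|p.re - e| + s*|x' - e| + s*(5*h/8) ≤ (1-s)*p.im + s*(3*h/4) := by
          linarith [mul_nonneg (by linarith : (0:ℝ) ≤ 1-s)
            (by linarith : (0:ℝ) ≤ p.im - |p.re - e|), mul_nonneg hs0 (by linarith [hxe] :
            (0:ℝ) ≤ (3*h/4) - |x' - e| - 5*h/8)]
        linarith
      refine ⟨g1, g2, g3, g4, memS _ ?_ ?_ ?_ (by linarith [g4, mul_nonneg hs0 (by linarith :
        (0:ℝ) ≤ 5*h/8)]) ?_⟩
      · rcases eq_or_lt_of_le hs0 with hseq | hslt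
        · rw [hre1, ← hseq]; simpa using hpa
        · linarith [g1, mul_pos hslt (show (0:ℝ) < h/8 by linarith)]
      · rcases eq_or_lt_of_le hs0 with hseq | hslt
        · rw [hre1, ← hseq]; simpa using hpb
        · linarith [g2, mul_pos hslt (show (0:ℝ) < h/8 by linarith)]
      · rw [him1]
        rcases eq_or_lt_of_le hs0 with hseq | hslt
        · rw [← hseq]; simpa using hpim
        · linarith [mul_nonneg (by linarith : (0:ℝ) ≤ 1-s) hpim.le,
            mul_pos hslt (show (0:ℝ) < 3*h/4 by linarith)]
      · rcases eq_or_lt_of_le hs0 with hseq | hslt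
        · rw [him1, ← hseq]; simpa using hpimh
        · linarith [g3, mul_pos hslt (show (0:ℝ) < h/4 by linarith)]
    -- margins along the second segment
    have hLg : |q.re - x'| ≤ 3*h/4 := by
      rw [hqre, abs_le]
      constructor <;> [linarith [hcl1 e₀, hcl2 e]; linarith [hcl2 e₀, hcl1 e]]
    have M2 : ∀ s ∈ Icc (0:ℝ) 1,
        a + h/8 ≤ (r + s • (q - r)).re ∧ (r + s • (q - r)).re ≤ b - h/8 ∧
        (r + s • (q - r)).im = 3*h/4 ∧ infDist ((r + s • (q - r)).re) E ≤ h/2 ∧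
        (r + s • (q - r)) ∈ S := by
      intro s hs
      obtain ⟨hs0, hs1⟩ := hs
      have hre2 : (r + s • (q - r)).re = x' + s*(q.re - x') := by
        rw [hre, hrre]
      have him2 : (r + s • (q - r)).im = 3*h/4 := by
        rw [him, hrim, hqim]; ring
      have g1 : a + h/8 ≤ (r + s • (q - r)).re := by
        rw [hre2]
        linarith [mul_nonneg hs0 (by linarith [hcl1 e₀] : (0:ℝ) ≤ q.re - (a+h/8)),
          mul_nonneg (by linarith : (0:ℝ) ≤ 1-s) (by linarith [hcl1 e] : (0:ℝ) ≤ x' - (a+h/8))]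
      have g2 : (r + s • (q - r)).re ≤ b - h/8 := by
        rw [hre2]
        linarith [mul_nonneg hs0 (by linarith [hcl2 e₀] : (0:ℝ) ≤ (b - h/8) - q.re),
          mul_nonneg (by linarith : (0:ℝ) ≤ 1-s) (by linarith [hcl2 e] : (0:ℝ) ≤ (b-h/8) - x')]
      have g4 : infDist ((r + s • (q - r)).re) E ≤ h/2 := by
        rcases le_total s (1/2) with hhalf | hhalf
        · have hid : infDist ((r + s • (q - r)).re) E ≤ |(r + s • (q - r)).re - e| := by
            rw [← Real.dist_eq]; exact infDist_le_dist_of_mem heE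
          have habs : |(r + s • (q - r)).re - e| ≤ s*|q.re - x'| + |x' - e| := by
            rw [hre2]
            have heq : x' + s*(q.re - x') - e = s*(q.re - x') + (x' - e) := by ring
            rw [heq]
            calc |s*(q.re - x') + (x' - e)| ≤ |s*(q.re - x')| + |x' - e| := abs_add_le _ _
              _ = s*|q.re - x'| + |x' - e| := by rw [abs_mul, abs_of_nonneg hs0]
          linarith [mul_le_mul_of_nonneg_left hLg hs0, hxe,
            mul_nonneg (by linarith : (0:ℝ) ≤ 1/2 - s) (by linarith : (0:ℝ) ≤ 3*h/4)]
        · have hxe₀ : |q.re - e₀| ≤ h/8 := by rw [hqre]; exact hcl3 e₀ he₀ab.1 he₀ab.2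
          have hid : infDist ((r + s • (q - r)).re) E ≤ |(r + s • (q - r)).re - e₀| := by
            rw [← Real.dist_eq]; exact infDist_le_dist_of_mem he₀
          have habs : |(r + s • (q - r)).re - e₀| ≤ (1-s)*|q.re - x'| + |q.re - e₀| := by
            rw [hre2]
            have heq : x' + s*(q.re - x') - e₀ = (1-s)*(x' - q.re) + (q.re - e₀) := by ring
            rw [heq]
            calc |(1-s)*(x' - q.re) + (q.re - e₀)| ≤ |(1-s)*(x' - q.re)| + |q.re - e₀| :=
                  abs_add_le _ _
              _ = (1-s)*|q.re - x'| + |q.re - e₀| := by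
                  rw [abs_mul, abs_of_nonneg (by linarith : (0:ℝ) ≤ 1-s), abs_sub_comm]
          linarith [mul_le_mul_of_nonneg_left hLg (by linarith : (0:ℝ) ≤ 1-s),
            mul_nonneg (by linarith : (0:ℝ) ≤ s - 1/2) (by linarith : (0:ℝ) ≤ 3*h/4)]
      exact ⟨g1, g2, him2, g4, memS _ (by linarith) (by linarith)
        (by rw [him2]; linarith) (by rw [him2]; linarith) (by rw [him2]; linarith)⟩
    -- the curve
    set σ : ℝ → ℂ := fun t => if t ≤ 1/2 then p + (2*t) • (r - p) else r + (2*t - 1) • (q - r)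
      with hσdef
    have hσhalf1 : ∀ t ∈ Icc (0:ℝ) (1/2), σ t = p + (2*t) • (r - p) := by
      intro t ht
      rw [hσdef]; simp only [if_pos ht.2]
    have hσhalf2 : ∀ t ∈ Icc (1/2:ℝ) 1, σ t = r + (2*t - 1) • (q - r) := by
      intro t ht
      rcases lt_or_ge (1/2:ℝ) t with hlt | hle
      · rw [hσdef]; simp only [if_neg (not_le.2 hlt)]
      · have ht2 : t = 1/2 := le_antisymm hle ht.1
        subst ht2
        rw [hσdef]
        norm_num
    clear_value σ
    have hσ0 : σ 0 = p := by
      rw [hσhalf1 0 ⟨le_refl _, by norm_num⟩]; norm_num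
    have hσ1 : σ 1 = q := by
      rw [hσhalf2 1 ⟨by norm_num, le_refl _⟩]; norm_num
    have hσS : ∀ t ∈ Icc (0:ℝ) 1, σ t ∈ S := by
      intro t ht
      rcases le_total t (1/2) with h12 | h12
      · rw [hσhalf1 t ⟨ht.1, h12⟩]
        exact (M1 (2*t) ⟨by linarith [ht.1], by linarith⟩).2.2.2.2
      · rw [hσhalf2 t ⟨h12, ht.2⟩]
        exact (M2 (2*t - 1) ⟨by linarith, by linarith [ht.2]⟩).2.2.2.2
    -- margins of σ t
    have hmarg : ∀ t ∈ Icc (0:ℝ) 1,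
        a + t*(h/16) ≤ (σ t).re ∧ (σ t).re ≤ b - t*(h/16) ∧
        (σ t).im ≤ h - t*(h/16) ∧ infDist ((σ t).re) E + t*(h/8) ≤ (σ t).im := by
      intro t ht
      rcases le_total t (1/2) with h12 | h12
      · rw [hσhalf1 t ⟨ht.1, h12⟩]
        obtain ⟨g1, g2, g3, g4, _⟩ := M1 (2*t) ⟨by linarith [ht.1], by linarith⟩
        have hth : 0 ≤ t * h := mul_nonneg ht.1 hh.le
        exact ⟨by linarith [g1, hth], by linarith [g2, hth], by linarith [g3, hth],
          by linarith [g4, hth]⟩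
      · rw [hσhalf2 t ⟨h12, ht.2⟩]
        obtain ⟨g1, g2, g3, g4, _⟩ := M2 (2*t - 1) ⟨by linarith, by linarith [ht.2]⟩
        have hth : 0 ≤ (1 - t) * h := mul_nonneg (by linarith [ht.2]) hh.le
        have hth2 : 0 ≤ t * h := mul_nonneg ht.1 hh.le
        refine ⟨by linarith [g1, hth], by linarith [g2, hth], ?_, ?_⟩
        · rw [g3]; linarith [hth]
        · rw [g3]; linarith [g4, hth]
    -- balls around σ t are in S
    have hσball : ∀ t ∈ Icc (0:ℝ) 1, Metric.ball (σ t) (t * h / 16) ⊆ S := by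
      intro t ht w hw
      rw [Metric.mem_ball] at hw
      have hρpos : 0 < t * h / 16 := lt_of_le_of_lt dist_nonneg hw
      obtain ⟨g1, g2, g3, g4⟩ := hmarg t ht
      have hdre : |w.re - (σ t).re| ≤ dist w (σ t) := by
        rw [Complex.dist_eq, ← Complex.sub_re]
        exact Complex.abs_re_le_norm _
      have hdim : |w.im - (σ t).im| ≤ dist w (σ t) := by
        rw [Complex.dist_eq, ← Complex.sub_im]
        exact Complex.abs_im_le_norm _
      have hre1 : |w.re - (σ t).re| < t * h / 16 := lt_of_le_of_lt hdre hw
      have him1 : |w.im - (σ t).im| < t * h / 16 := lt_of_le_of_lt hdim hw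
      rw [abs_lt] at hre1 him1
      have hE0 : (0:ℝ) ≤ infDist ((σ t).re) E := infDist_nonneg
      have hEw : infDist w.re E ≤ infDist ((σ t).re) E + |w.re - (σ t).re| := by
        rw [← Real.dist_eq]
        exact infDist_le_infDist_add_dist
      have hre2 : |w.re - (σ t).re| < t * h / 16 := lt_of_le_of_lt hdre hw
      refine memS w (by linarith [g1, hre1.1]) (by linarith [g2, hre1.2]) ?_ ?_
        (by linarith [g3, him1.2])
      · linarith [g4, him1.1, hE0]
      · have : infDist w.re E < infDist ((σ t).re) E + t * h / 16 := by
          have := abs_nonneg (w.re - (σ t).re)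
          calc infDist w.re E ≤ infDist ((σ t).re) E + |w.re - (σ t).re| := hEw
            _ < _ := by linarith [hre2]
        linarith [g4, him1.1]
    -- Lipschitz bound for f ∘ σ
    have hrp : ‖r - p‖ ≤ 2*h := by
      refine (Complex.norm_le_abs_re_add_abs_im _).trans ?_
      rw [Complex.sub_re, Complex.sub_im, hrre, hrim]
      have h1 : |x' - p.re| ≤ h := by
        rw [abs_le]; constructor <;> [linarith [hcl1 e]; linarith [hcl2 e]]
      have h2 : |3*h/4 - p.im| ≤ h := by
        rw [abs_le]; constructor <;> linarith
      linarith
    have hqr : ‖q - r‖ ≤ 2*h := by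
      refine (Complex.norm_le_abs_re_add_abs_im _).trans ?_
      rw [Complex.sub_re, Complex.sub_im, hqim, hrim, hrre]
      have h2 : |3*h/4 - 3*h/4| = (0:ℝ) := by simp
      rw [h2]
      linarith [hLg]
    have piece1 : ∀ t₁ ∈ Icc (0:ℝ) (1/2), ∀ t₂ ∈ Icc (0:ℝ) (1/2), t₁ ≤ t₂ →
        dist (f (σ t₂)) (f (σ t₁)) ≤ (4*(K*m)*h) * (t₂ - t₁) := by
      intro t₁ h₁ t₂ h₂ hle
      have hseg : ∀ s ∈ Icc (0:ℝ) 1, σ t₁ + s • (σ t₂ - σ t₁) ∈ S := by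
        intro s hs
        have heq : σ t₁ + s • (σ t₂ - σ t₁) = p + (2*(t₁ + s*(t₂ - t₁))) • (r - p) := by
          rw [hσhalf1 t₁ h₁, hσhalf1 t₂ h₂]
          module
        rw [heq]
        have hmem : (2*(t₁ + s*(t₂ - t₁))) ∈ Icc (0:ℝ) 1 := by
          constructor
          · linarith [mul_nonneg hs.1 (sub_nonneg.2 hle), h₁.1]
          · linarith [mul_le_of_le_one_left (sub_nonneg.2 hle) hs.2, h₂.2]
        have := M1 _ hmem
        exact this.2.2.2.2
      have hmv := norm_sub_le_of_segment hf hSU hup hseg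
      rw [dist_eq_norm]
      have hdiff : σ t₂ - σ t₁ = (2*(t₂ - t₁)) • (r - p) := by
        rw [hσhalf1 t₁ h₁, hσhalf1 t₂ h₂]
        module
      have hnorm : ‖σ t₂ - σ t₁‖ = (2*(t₂ - t₁)) * ‖r - p‖ := by
        rw [hdiff, norm_smul, Real.norm_eq_abs, abs_of_nonneg (by linarith : (0:ℝ) ≤ 2*(t₂-t₁))]
      calc ‖f (σ t₂) - f (σ t₁)‖ ≤ (K*m) * ‖σ t₂ - σ t₁‖ := hmv
        _ ≤ (4*(K*m)*h) * (t₂ - t₁) := by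
            rw [hnorm]
            nlinarith [mul_nonneg (mul_nonneg hKm0 (sub_nonneg.2 hle))
              (by linarith [hrp] : (0:ℝ) ≤ 2*h - ‖r - p‖), hKm0, hrp]
    have piece2 : ∀ t₁ ∈ Icc (1/2:ℝ) 1, ∀ t₂ ∈ Icc (1/2:ℝ) 1, t₁ ≤ t₂ →
        dist (f (σ t₂)) (f (σ t₁)) ≤ (4*(K*m)*h) * (t₂ - t₁) := by
      intro t₁ h₁ t₂ h₂ hle
      have hseg : ∀ s ∈ Icc (0:ℝ) 1, σ t₁ + s • (σ t₂ - σ t₁) ∈ S := by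
        intro s hs
        have heq : σ t₁ + s • (σ t₂ - σ t₁) = r + (2*(t₁ + s*(t₂ - t₁)) - 1) • (q - r) := by
          rw [hσhalf2 t₁ h₁, hσhalf2 t₂ h₂]
          module
        rw [heq]
        have hmem : (2*(t₁ + s*(t₂ - t₁)) - 1) ∈ Icc (0:ℝ) 1 := by
          constructor
          · linarith [mul_nonneg hs.1 (sub_nonneg.2 hle), h₁.1]
          · linarith [mul_le_of_le_one_left (sub_nonneg.2 hle) hs.2, h₂.2]
        exact (M2 _ hmem).2.2.2.2
      have hmv := norm_sub_le_of_segment hf hSU hup hseg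
      rw [dist_eq_norm]
      have hdiff : σ t₂ - σ t₁ = (2*(t₂ - t₁)) • (q - r) := by
        rw [hσhalf2 t₁ h₁, hσhalf2 t₂ h₂]
        module
      have hnorm : ‖σ t₂ - σ t₁‖ = (2*(t₂ - t₁)) * ‖q - r‖ := by
        rw [hdiff, norm_smul, Real.norm_eq_abs, abs_of_nonneg (by linarith : (0:ℝ) ≤ 2*(t₂-t₁))]
      calc ‖f (σ t₂) - f (σ t₁)‖ ≤ (K*m) * ‖σ t₂ - σ t₁‖ := hmv
        _ ≤ (4*(K*m)*h) * (t₂ - t₁) := by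
            rw [hnorm]
            nlinarith [mul_nonneg (mul_nonneg hKm0 (sub_nonneg.2 hle))
              (by linarith [hqr] : (0:ℝ) ≤ 2*h - ‖q - r‖)]
    have main : ∀ t₁ ∈ Icc (0:ℝ) 1, ∀ t₂ ∈ Icc (0:ℝ) 1, t₁ ≤ t₂ →
        dist (f (σ t₂)) (f (σ t₁)) ≤ (4*(K*m)*h) * (t₂ - t₁) := by
      intro t₁ h₁ t₂ h₂ hle
      rcases le_total t₂ (1/2) with hc | hc
      · exact piece1 t₁ ⟨h₁.1, hle.trans hc⟩ t₂ ⟨h₂.1, hc⟩ hle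
      · rcases le_total (1/2) t₁ with hc' | hc'
        · exact piece2 t₁ ⟨hc', h₁.2⟩ t₂ ⟨hc'.trans hle, h₂.2⟩ hle
        · calc dist (f (σ t₂)) (f (σ t₁))
              ≤ dist (f (σ t₂)) (f (σ (1/2))) + dist (f (σ (1/2))) (f (σ t₁)) :=
                dist_triangle _ _ _
            _ ≤ (4*(K*m)*h) * (t₂ - 1/2) + (4*(K*m)*h) * (1/2 - t₁) := by
                refine add_le_add (piece2 (1/2) ⟨le_refl _, by norm_num⟩ t₂ ⟨hc, h₂.2⟩ hc)
                  (piece1 t₁ ⟨h₁.1, hc'⟩ (1/2) ⟨by norm_num, le_refl _⟩ hc')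
            _ = (4*(K*m)*h) * (t₂ - t₁) := by ring
    have hlip : LipschitzOnWith (Real.toNNReal (4*(K*m)*h)) (f ∘ σ) (Icc 0 1) := by
      refine LipschitzOnWith.of_dist_le' ?_
      intro t₁ h₁ t₂ h₂
      rcases le_total t₁ t₂ with hle | hle
      · rw [dist_comm, Real.dist_eq, abs_of_nonpos (by linarith), Function.comp_apply,
          Function.comp_apply]
        have := main t₁ h₁ t₂ h₂ hle
        calc dist (f (σ t₂)) (f (σ t₁)) ≤ (4*(K*m)*h) * (t₂ - t₁) := this
          _ = (4*(K*m)*h) * -(t₁ - t₂) := by ring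
      · rw [Real.dist_eq, abs_of_nonneg (by linarith), Function.comp_apply,
          Function.comp_apply]
        exact main t₂ h₂ t₁ h₁ hle
    exact ⟨σ, hσ0, hσ1, hσS, hσball, hlip⟩
  -- bound on the image
  have hbnd : ∀ w ∈ f '' S, dist w (f q) ≤ 4*(K*m)*h := by
    rintro w ⟨p', hp', rfl⟩
    obtain ⟨σ', h0, h1, _, _, hlip⟩ := key p' hp'
    have hm01 : (0:ℝ) ∈ Icc (0:ℝ) 1 := ⟨le_refl _, by norm_num⟩
    have hm11 : (1:ℝ) ∈ Icc (0:ℝ) 1 := ⟨by norm_num, le_refl _⟩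
    have := hlip.dist_le_mul 0 hm01 1 hm11
    rw [Function.comp_apply, Function.comp_apply, h0, h1] at this
    have hd01 : dist (0:ℝ) 1 = 1 := by
      rw [Real.dist_eq]; norm_num
    rw [hd01, mul_one] at this
    calc dist (f p') (f q) ≤ (Real.toNNReal (4*(K*m)*h) : ℝ) := this
      _ = 4*(K*m)*h := Real.coe_toNNReal _ (by positivity)
  have hΩne : (f '' S).Nonempty := ⟨f q, q, hqS, rfl⟩
  have hΩnu : f '' S ≠ univ := by
    intro hu
    have hmem : f q + ((4*(K*m)*h + 1 : ℝ) : ℂ) ∈ f '' S := by rw [hu]; exact mem_univ _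
    have hb := hbnd _ hmem
    have : dist (f q + ((4*(K*m)*h + 1 : ℝ) : ℂ)) (f q) = 4*(K*m)*h + 1 := by
      rw [dist_eq_norm]
      have : f q + ((4*(K*m)*h + 1 : ℝ) : ℂ) - f q = ((4*(K*m)*h + 1 : ℝ) : ℂ) := by ring
      rw [this, Complex.norm_real, Real.norm_eq_abs, abs_of_nonneg (by positivity)]
    rw [this] at hb
    linarith
  have hfront : (frontier (f '' S)).Nonempty := by
    rw [nonempty_iff_ne_empty]
    intro hfe
    rcases isClopen_iff.1 (isClopen_iff_frontier_eq_empty.2 hfe) with h0 | h0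
    · exact hΩne.ne_empty h0
    · exact hΩnu h0
  refine ⟨f q, ⟨q, hqS, rfl⟩, ⟨q, hqS, rfl⟩, ?_⟩
  rintro z ⟨p, hpS, rfl⟩
  obtain ⟨σ, hσ0, hσ1, hσS, hσball, hσlip⟩ := key p hpS
  have hΛnn : (0:ℝ) ≤ 4*(K*m)*h := by positivity
  have hev : ∀ t ∈ Icc (0:ℝ) 1,
      (eVariationOn (f ∘ σ) (Icc 0 t)).toReal ≤ 4*(K*m)*h * t := by
    intro t ht
    have hlip' := hσlip.mono (Icc_subset_Icc_right ht.2)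
    have h1 := eVariationOn_le_of_lip hlip'
    have h2 : ((Real.toNNReal (4*(K*m)*h) : ℝ≥0) : ℝ≥0∞) * ENNReal.ofReal (t - 0)
        = ENNReal.ofReal (4*(K*m)*h * t) := by
      rw [sub_zero, ENNReal.ofReal_mul hΛnn]
      rfl
    rw [h2] at h1
    exact ENNReal.toReal_le_of_le_ofReal (mul_nonneg hΛnn ht.1) h1
  refine ⟨f ∘ σ, hσlip.continuousOn, by rw [Function.comp_apply, hσ0],
    by rw [Function.comp_apply, hσ1], fun t ht => ⟨σ t, hσS t ht, rfl⟩, ?_, ?_⟩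
  · have h1 := eVariationOn_le_of_lip hσlip
    exact ne_top_of_le_ne_top (ENNReal.mul_ne_top ENNReal.coe_ne_top ENNReal.ofReal_ne_top) h1
  · intro t ht
    have hevt := hev t ht
    have hCpos : (0:ℝ) < 1024 * K ^ 4 := by positivity
    have hinf0 : (0:ℝ) ≤ infDist ((f ∘ σ) t) (frontier (f '' S)) := infDist_nonneg
    rcases eq_or_lt_of_le hm0 with hmz | hmz
    · -- m = 0 : the variation vanishes
      have : 4*(K*m)*h * t ≤ 0 := by rw [← hmz]; simp
      nlinarith
    rcases eq_or_lt_of_le ht.1 with htz | htz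
    · -- t = 0
      have : (eVariationOn (f ∘ σ) (Icc 0 t)).toReal ≤ 0 := by
        rw [← htz] at hevt ⊢
        simpa using hevt
      nlinarith
    -- main case : t > 0 and m > 0
    have hd : 0 < t * h / 16 := by positivity
    have hball := hσball t ht
    have hμpos : 0 < m / K := by positivity
    have himg := closedBall_subset_image (f := f) (z := σ t) (d := t * h / 16)
      (μ := m / K) (Λ := K * m) hd hμpos
      (hf.mono (fun w hw => hSU (hball hw)))
      (fun w hw => hlow w (hball hw))
      (fun w hw => hup w (hball hw))
    have hrad : (m/K)^2 * (t * h / 16) / (16 * (K * m)) = m * t * h / (256 * K^3) := by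
      field_simp
      ring
    have hinf : m * t * h / (256 * K^3) ≤ infDist ((f ∘ σ) t) (frontier (f '' S)) := by
      refine le_infDist' hfront ?_
      intro y hy
      by_contra hlt
      push_neg at hlt
      have hymem : y ∈ Metric.ball (f (σ t)) ((m/K)^2 * (t * h / 16) / (16 * (K * m))) := by
        rw [Metric.mem_ball, dist_comm, hrad]
        exact hlt
      have hyint : y ∈ interior (f '' S) := by
        refine interior_maximal ?_ Metric.isOpen_ball hymem
        refine subset_trans Metric.ball_subset_closedBall (himg.trans ?_)
        exact image_mono (hball)
      exact hy.2 hyint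
    have hfinal : 4*(K*m)*h * t ≤ 1024 * K ^ 4 * (m * t * h / (256 * K^3)) := by
      have : 1024 * K ^ 4 * (m * t * h / (256 * K^3)) = 4*(K*m)*h * t := by
        field_simp
        ring
      rw [this]
    calc (eVariationOn (f ∘ σ) (Icc 0 t)).toReal ≤ 4*(K*m)*h * t := hevt
      _ ≤ 1024 * K ^ 4 * (m * t * h / (256 * K^3)) := hfinal
      _ ≤ 1024 * K ^ 4 * infDist ((f ∘ σ) t) (frontier (f '' S)) := by
          exact mul_le_mul_of_nonneg_left hinf hCpos.le
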